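/- Let R be a commutative ring and J an ideal of R with J² = 0, so that J carries a natural R/J-module structure. If the quotient ring R/J is a weakly Laskerian ring and J is weakly Laskerian as an R/J-module, then R is a weakly Laskerian ring. -/

import Mathlib

/-- An `R`-module `M` is *weakly Laskerian* if every quotient of `M` has only finitely many
associated prime ideals. -/
def IsWeaklyLaskerian (R : Type*) [CommRing R] (M : Type*) [AddCommGroup M]
    [Module R M] : Prop :=
  ∀ N : Submodule R M, (associatedPrimes R (M ⧸ N)).Finite

/-- An ideal `J` with `J ^ 2 = 0` is torsion by `J`, so it carries a natural
`R ⧸ J`-module structure. -/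
theorem isTorsionBySet_of_sq_eq_bot {R : Type*} [CommRing R] (J : Ideal R)
    (hJ2 : J ^ 2 = ⊥) : Module.IsTorsionBySet R J (J : Set R) := by
  intro x a
  ext
  have : (a : R) * (x : R) ∈ J ^ 2 := by
    rw [pow_two]
    exact Ideal.mul_mem_mul a.2 x.2
  simpa using (Submodule.eq_bot_iff _).mp hJ2 _ this

/-- Associated primes of a module are among those of a submodule and the quotient. -/
theorem associatedPrimes_subset_union_aux {R M : Type*} [CommRing R] [AddCommGroup M]
    [Module R M] (N : Submodule R M) :
    associatedPrimes R M ⊆ associatedPrimes R N ∪ associatedPrimes R (M ⧸ N) := by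
  exact associatedPrimes.subset_union_of_exact (f := N.subtype) (g := N.mkQ) N.injective_subtype
    (LinearMap.exact_subtype_mkQ N)

/-- Transfer finiteness of associated primes along a surjective ring hom with
compatible module structures. -/
theorem associatedPrimes_finite_of_surjective_aux {R S : Type*} [CommRing R] [CommRing S]
    (f : R →+* S) (hf : Function.Surjective f)
    {M : Type*} [AddCommGroup M] [Module R M] [Module S M]
    (hc : ∀ (r : R) (x : M), f r • x = r • x)
    (hfin : (associatedPrimes S M).Finite) : (associatedPrimes R M).Finite := by
  refine Set.Finite.subset (hfin.image (Ideal.comap f)) ?_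
  rintro p ⟨hp, x, rfl⟩
  have hcomap : ((⊥ : Submodule S M).colon {x}).radical.comap f =
      ((⊥ : Submodule R M).colon {x}).radical := by
    ext r
    simp only [Ideal.mem_comap, Ideal.mem_radical_iff, Submodule.mem_colon_singleton,
      Submodule.mem_bot, ← map_pow, hc]
  have hq : (((⊥ : Submodule S M).colon {x}).radical).IsPrime := by
    have hker : RingHom.ker f ≤ ((⊥ : Submodule R M).colon {x}).radical := by
      rw [← hcomap]; exact Ideal.comap_mono bot_le
    rw [← Ideal.map_comap_of_surjective f hf (((⊥ : Submodule S M).colon {x}).radical), hcomap]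
    exact Ideal.map_isPrime_of_surjective hf hker
  exact ⟨_, ⟨hq, x, rfl⟩, hcomap⟩

/-- A surjective image of a weakly Laskerian module is weakly Laskerian. -/
theorem isWeaklyLaskerian_of_surjective_aux {S A B : Type*} [CommRing S] [AddCommGroup A]
    [Module S A] [AddCommGroup B] [Module S B] (g : A →ₗ[S] B) (hg : Function.Surjective g)
    (hA : IsWeaklyLaskerian S A) : IsWeaklyLaskerian S B := by
  intro N
  have e : (A ⧸ N.comap g) ≃ₗ[S] B ⧸ N := by
    refine LinearEquiv.ofBijective (Submodule.mapQ (N.comap g) N g le_rfl) ⟨?_, ?_⟩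
    · rw [← LinearMap.ker_eq_bot]
      apply Submodule.ker_liftQ_eq_bot
      rw [LinearMap.ker_comp, Submodule.ker_mkQ]
    · intro b
      obtain ⟨b, rfl⟩ := Submodule.mkQ_surjective N b
      obtain ⟨a, rfl⟩ := hg b
      exact ⟨Submodule.Quotient.mk a, by rw [Submodule.mapQ_apply]; rfl⟩
  rw [← LinearEquiv.AssociatedPrimes.eq e]
  exact hA _

/-- Upgrade an `R`-linear map to an `S`-linear map along a surjective ring hom. -/
def extendScalarsAux {R S : Type*} [CommRing R] [CommRing S] (f : R →+* S)
    (hf : Function.Surjective f) {M M' : Type*} [AddCommGroup M] [Module R M] [Module S M]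
    [AddCommGroup M'] [Module R M'] [Module S M']
    (hc : ∀ (r : R) (x : M), f r • x = r • x) (hc' : ∀ (r : R) (x : M'), f r • x = r • x)
    (g : M →ₗ[R] M') : M →ₗ[S] M' where
  toFun := g
  map_add' := g.map_add
  map_smul' := fun s x => by
    obtain ⟨r, rfl⟩ := hf s
    rw [RingHom.id_apply, hc, hc']
    exact g.map_smul r x

/-- Let `J` be an ideal of `R` with `J ^ 2 = 0`, so that `J` carries a natural
`R ⧸ J`-module structure. If the ring `R ⧸ J` is weakly Laskerian and `J` is weakly
Laskerian as an `R ⧸ J`-module, then the ring `R` is weakly Laskerian. -/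
theorem isWeaklyLaskerian_of_sq_eq_bot {R : Type*} [CommRing R] (J : Ideal R)
    (hJ2 : J ^ 2 = ⊥)
    (hq : IsWeaklyLaskerian (R ⧸ J) (R ⧸ J))
    (hJ : letI := (isTorsionBySet_of_sq_eq_bot J hJ2).module
      IsWeaklyLaskerian (R ⧸ J) J) :
    IsWeaklyLaskerian R R := by
  letI := (isTorsionBySet_of_sq_eq_bot J hJ2).module
  intro N
  set P : Submodule R (R ⧸ N) := Submodule.map N.mkQ (N ⊔ J) with hPdef
  -- J kills everything in sight
  have hmulN : ∀ j ∈ J, ∀ k ∈ N ⊔ J, j * k ∈ N := by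
    intro j hj k hk
    rcases Submodule.mem_sup.mp hk with ⟨n, hn, j', hj', rfl⟩
    have h2 : j * j' = 0 := by
      have : j * j' ∈ J ^ 2 := by rw [pow_two]; exact Ideal.mul_mem_mul hj hj'
      simpa using (Submodule.eq_bot_iff _).mp hJ2 _ this
    have : j * (n + j') = j * n + j * j' := mul_add j n j'
    rw [this, h2, add_zero]
    exact N.smul_mem j hn
  have htP : Module.IsTorsionBySet R P (J : Set R) := by
    rintro ⟨x, hx⟩ ⟨j, hj⟩
    obtain ⟨k, hk, rfl⟩ := hx
    ext
    show j • Submodule.Quotient.mk k = 0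
    rw [← Submodule.Quotient.mk_smul, Submodule.Quotient.mk_eq_zero]
    exact hmulN j hj k hk
  have htQ : Module.IsTorsionBySet R ((R ⧸ N) ⧸ P) (J : Set R) := by
    rw [Module.isTorsionBySet_quotient_iff]
    intro x j hj
    obtain ⟨k, rfl⟩ := Submodule.mkQ_surjective N x
    refine ⟨j • k, Submodule.mem_sup_right (J.mul_mem_right k hj), rfl⟩
  letI := htP.module
  letI := htQ.module
  -- compatibility of scalar actions
  have hcJ : ∀ (r : R) (x : J), Ideal.Quotient.mk J r • x = r • x := fun r x => rfl
  have hcP : ∀ (r : R) (x : P), Ideal.Quotient.mk J r • x = r • x := fun r x => rfl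
  have hcQ : ∀ (r : R) (x : (R ⧸ N) ⧸ P), Ideal.Quotient.mk J r • x = r • x := fun r x => rfl
  have hcS : ∀ (r : R) (x : R ⧸ J), Ideal.Quotient.mk J r • x = r • x := by
    intro r x
    obtain ⟨s, rfl⟩ := Ideal.Quotient.mk_surjective x
    rfl
  -- `P` is a surjective image of `J` as an `R ⧸ J`-module
  have hWP : IsWeaklyLaskerian (R ⧸ J) P := by
    have hmemP : ∀ x : J, N.mkQ x ∈ P := fun x =>
      ⟨x, Submodule.mem_sup_right x.2, rfl⟩
    set g1 : J →ₗ[R] P := LinearMap.codRestrict P (N.mkQ.comp J.subtype) hmemP with hg1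
    have hsurj : Function.Surjective g1 := by
      rintro ⟨x, hx⟩
      obtain ⟨k, hk, rfl⟩ := hx
      rcases Submodule.mem_sup.mp hk with ⟨n, hn, j, hj, rfl⟩
      refine ⟨⟨j, hj⟩, ?_⟩
      ext
      show N.mkQ j = N.mkQ (n + j)
      have h0 : N.mkQ n = 0 := (Submodule.Quotient.mk_eq_zero N).mpr hn
      rw [map_add, h0, zero_add]
    exact isWeaklyLaskerian_of_surjective_aux
      (extendScalarsAux (Ideal.Quotient.mk J) Ideal.Quotient.mk_surjective hcJ hcP g1)
      hsurj hJ
  -- `(R ⧸ N) ⧸ P` is a surjective image of `R ⧸ J` as an `R ⧸ J`-module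
  have hWQ : IsWeaklyLaskerian (R ⧸ J) ((R ⧸ N) ⧸ P) := by
    have hker : J ≤ LinearMap.ker (P.mkQ.comp N.mkQ) := by
      intro j hj
      rw [LinearMap.mem_ker, LinearMap.comp_apply, Submodule.mkQ_apply, Submodule.mkQ_apply,
        Submodule.Quotient.mk_eq_zero]
      exact ⟨j, Submodule.mem_sup_right hj, rfl⟩
    set g2 : (R ⧸ J) →ₗ[R] ((R ⧸ N) ⧸ P) := Submodule.liftQ J (P.mkQ.comp N.mkQ) hker with hg2
    have hsurj : Function.Surjective g2 := by
      intro x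
      obtain ⟨y, rfl⟩ := Submodule.mkQ_surjective P x
      obtain ⟨k, rfl⟩ := Submodule.mkQ_surjective N y
      exact ⟨Submodule.Quotient.mk k, rfl⟩
    exact isWeaklyLaskerian_of_surjective_aux
      (extendScalarsAux (Ideal.Quotient.mk J) Ideal.Quotient.mk_surjective hcS hcQ g2)
      hsurj hq
  -- conclude
  have hfinP : (associatedPrimes R P).Finite := by
    refine associatedPrimes_finite_of_surjective_aux (Ideal.Quotient.mk J)
      Ideal.Quotient.mk_surjective hcP ?_
    have := hWP ⊥
    rwa [LinearEquiv.AssociatedPrimes.eq (Submodule.quotEquivOfEqBot (⊥ : Submodule (R ⧸ J) P)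
      rfl)] at this
  have hfinQ : (associatedPrimes R ((R ⧸ N) ⧸ P)).Finite := by
    refine associatedPrimes_finite_of_surjective_aux (Ideal.Quotient.mk J)
      Ideal.Quotient.mk_surjective hcQ ?_
    have := hWQ ⊥
    rwa [LinearEquiv.AssociatedPrimes.eq (Submodule.quotEquivOfEqBot
      (⊥ : Submodule (R ⧸ J) ((R ⧸ N) ⧸ P)) rfl)] at this
  exact (hfinP.union hfinQ).subset (associatedPrimes_subset_union_aux P)
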